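/- arXiv:2505.08677 — 2 statements merged into one kernel-verified Lean document; each statement's English description precedes it below -/
import Mathlib

section
/- Let A be the N×N tridiagonal matrix with A_{ii} = λ_i + μ_i, A_{i,i+1} = −λ_i, A_{i,i−1} = −μ_i (indices in {1,…,N}), where μ_i > 0 for all i, λ_i ≥ 0, λ_N = 0. Then A is invertible and (A^{-1})_{ij} = ζ_{ij} := Σ_{ℓ=1}^{min(i,j)} η_{ℓj}, where η_{ℓj} = (λ_ℓ ⋯ λ_{j−1})/(μ_ℓ ⋯ μ_j) for ℓ ≤ j (empty product = 1). -/
open Matrix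


noncomputable def tds_eta (lam mu : ℕ → ℝ) (ℓ j : ℕ) : ℝ :=
  (∏ k ∈ Finset.Ico ℓ j, lam k) / (∏ k ∈ Finset.Icc ℓ j, mu k)

noncomputable def tds_zeta (lam mu : ℕ → ℝ) (i j : ℕ) : ℝ :=
  ∑ ℓ ∈ Finset.Icc 1 (min i j), tds_eta lam mu ℓ j

lemma tds_zeta_zero (lam mu : ℕ → ℝ) (j : ℕ) : tds_zeta lam mu 0 j = 0 := by
  simp [tds_zeta]

lemma tds_zeta_succ (lam mu : ℕ → ℝ) (i j : ℕ) :
    tds_zeta lam mu (i + 1) j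
      = tds_zeta lam mu i j + (if i + 1 ≤ j then tds_eta lam mu (i + 1) j else 0) := by
  by_cases h : i + 1 ≤ j
  · have h1 : min (i + 1) j = i + 1 := min_eq_left h
    have h2 : min i j = i := min_eq_left (Nat.le_of_succ_le h)
    rw [tds_zeta, tds_zeta, h1, h2, if_pos h, Finset.sum_Icc_succ_top (Nat.one_le_iff_ne_zero.mpr (Nat.succ_ne_zero i))]
  · have hj : j ≤ i := Nat.le_of_lt_succ (Nat.lt_of_not_le h)
    have h1 : min (i + 1) j = j := min_eq_right (Nat.le_succ_of_le hj)
    have h2 : min i j = j := min_eq_right hj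
    rw [tds_zeta, tds_zeta, h1, h2, if_neg h, add_zero]

lemma tds_eta_diag (lam mu : ℕ → ℝ) (i : ℕ) (hm : mu i ≠ 0) :
    mu i * tds_eta lam mu i i = 1 := by
  simp [tds_eta, Finset.Icc_self]
  field_simp

lemma tds_eta_rec (lam mu : ℕ → ℝ) (i j : ℕ) (h : i < j)
    (hm : ∀ k, i ≤ k → k ≤ j → mu k ≠ 0) :
    mu i * tds_eta lam mu i j = lam i * tds_eta lam mu (i + 1) j := by
  have hprodl : ∏ k ∈ Finset.Ico i j, lam k = lam i * ∏ k ∈ Finset.Ico (i + 1) j, lam k :=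
    Finset.prod_eq_prod_Ico_succ_bot h lam
  have hic : ∏ k ∈ Finset.Icc i j, mu k = mu i * ∏ k ∈ Finset.Icc (i + 1) j, mu k := by
    rw [← Finset.Ico_add_one_right_eq_Icc, ← Finset.Ico_add_one_right_eq_Icc]
    exact Finset.prod_eq_prod_Ico_succ_bot (Nat.lt_succ_of_lt h) mu
  have hne : ∏ k ∈ Finset.Icc (i + 1) j, mu k ≠ 0 := by
    apply Finset.prod_ne_zero_iff.mpr
    intro k hk
    rw [Finset.mem_Icc] at hk
    exact hm k (Nat.le_of_succ_le hk.1) hk.2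
  have hmi : mu i ≠ 0 := hm i le_rfl (Nat.le_of_lt h)
  rw [tds_eta, tds_eta, hprodl, hic]
  field_simp

lemma tds_key (N : ℕ) (lam mu : ℕ → ℝ)
    (hmu : ∀ i, 1 ≤ i → i ≤ N → 0 < mu i)
    (i j : ℕ) (hi : i + 1 ≤ N) (hj1 : 1 ≤ j) (hj2 : j ≤ N) :
    (lam (i + 1) + mu (i + 1)) * tds_zeta lam mu (i + 1) j
      - lam (i + 1) * tds_zeta lam mu (i + 2) j
      - mu (i + 1) * tds_zeta lam mu i j
      = if i + 1 = j then 1 else 0 := by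
  rw [show i + 2 = (i + 1) + 1 from rfl, tds_zeta_succ lam mu (i+1) j, tds_zeta_succ lam mu i j]
  rcases lt_trichotomy (i + 1) j with h | h | h
  · rw [if_neg (Nat.ne_of_lt h), if_pos (Nat.le_of_lt h), if_pos (show i + 1 + 1 ≤ j from h)]
    have := tds_eta_rec lam mu (i + 1) j h (fun k hk1 hk2 => ne_of_gt (hmu k (le_trans (Nat.le_add_left 1 i) hk1) (le_trans hk2 hj2)))
    linarith [this]
  · rw [if_pos h, if_pos (le_of_eq h), if_neg (by omega)]
    have hmne : mu (i + 1) ≠ 0 := ne_of_gt (hmu (i + 1) (Nat.le_add_left 1 i) hi)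
    have := tds_eta_diag lam mu (i + 1) hmne
    rw [h] at this ⊢
    rw [← h] at this ⊢
    linarith [this]
  · rw [if_neg (by omega), if_neg (by omega), if_neg (by omega)]
    ring

/-- The tridiagonal matrix `A` (indices `1,…,N`, realised as `Fin N` via `i ↦ i+1`)
with `A_{ii} = λ_i + μ_i`, `A_{i,i+1} = -λ_i`, `A_{i,i-1} = -μ_i`, where
`μ_i > 0`, `λ_i ≥ 0`, `λ_N = 0`, is invertible with inverse entries
`ζ_{ij} = Σ_{ℓ=1}^{min(i,j)} (λ_ℓ⋯λ_{j-1})/(μ_ℓ⋯μ_j)`. -/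
theorem tridiagonal_inverse_sojourn (N : ℕ) (lam mu : ℕ → ℝ)
    (hmu : ∀ i, 1 ≤ i → i ≤ N → 0 < mu i) (hlam : ∀ i, 0 ≤ lam i)
    (hlamN : lam N = 0) :
    let A : Matrix (Fin N) (Fin N) ℝ := fun i j =>
      if (j : ℕ) = (i : ℕ) then lam ((i : ℕ) + 1) + mu ((i : ℕ) + 1)
      else if (j : ℕ) = (i : ℕ) + 1 then -lam ((i : ℕ) + 1)
      else if (j : ℕ) + 1 = (i : ℕ) then -mu ((i : ℕ) + 1)
      else 0
    let Z : Matrix (Fin N) (Fin N) ℝ := fun i j =>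
      ∑ ℓ ∈ Finset.Icc 1 (min ((i : ℕ) + 1) ((j : ℕ) + 1)),
        (∏ k ∈ Finset.Ico ℓ ((j : ℕ) + 1), lam k)
          / (∏ k ∈ Finset.Icc ℓ ((j : ℕ) + 1), mu k)
    A * Z = 1 ∧ Z * A = 1 := by
  intro A Z
  have hA : ∀ a b : Fin N, A a b =
      (if (b : ℕ) = (a : ℕ) then lam ((a : ℕ) + 1) + mu ((a : ℕ) + 1)
      else if (b : ℕ) = (a : ℕ) + 1 then -lam ((a : ℕ) + 1)
      else if (b : ℕ) + 1 = (a : ℕ) then -mu ((a : ℕ) + 1)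
      else 0) := fun a b => rfl
  have hZ : ∀ a b : Fin N, Z a b = tds_zeta lam mu ((a : ℕ) + 1) ((b : ℕ) + 1) :=
    fun a b => rfl
  have key : A * Z = 1 := by
    ext i j
    rw [Matrix.mul_apply, Matrix.one_apply]
    set c1 := (lam ((i:ℕ)+1) + mu ((i:ℕ)+1)) * tds_zeta lam mu ((i:ℕ)+1) ((j:ℕ)+1) with hc1
    set c2 := -(lam ((i:ℕ)+1) * tds_zeta lam mu ((i:ℕ)+2) ((j:ℕ)+1)) with hc2
    set c3 := -(mu ((i:ℕ)+1) * tds_zeta lam mu (i:ℕ) ((j:ℕ)+1)) with hc3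
    have hstep : ∑ k : Fin N, A i k * Z k j
        = ∑ k ∈ Finset.range N,
            ((if k = (i:ℕ) then c1 else 0) + (if k = (i:ℕ)+1 then c2 else 0)
              + (if k + 1 = (i:ℕ) then c3 else 0)) := by
      rw [← Fin.sum_univ_eq_sum_range]
      apply Finset.sum_congr rfl
      intro k _
      rw [hA, hZ]
      by_cases h1 : (k:ℕ) = (i:ℕ)
      · rw [if_pos h1, if_pos h1,
          if_neg (show ¬((k:ℕ) = (i:ℕ)+1) by omega),
          if_neg (show ¬((k:ℕ)+1 = (i:ℕ)) by omega), h1, hc1]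
        ring
      · by_cases h2 : (k:ℕ) = (i:ℕ) + 1
        · rw [if_neg h1, if_pos h2, if_neg h1, if_pos h2,
            if_neg (show ¬((k:ℕ)+1 = (i:ℕ)) by omega), h2, hc2]
          ring
        · by_cases h3 : (k:ℕ) + 1 = (i:ℕ)
          · rw [if_neg h1, if_neg h2, if_pos h3, if_neg h1, if_neg h2, if_pos h3,
              h3, hc3]
            ring
          · rw [if_neg h1, if_neg h2, if_neg h3, if_neg h1, if_neg h2, if_neg h3]
            ring
    rw [hstep, Finset.sum_add_distrib, Finset.sum_add_distrib,
      Finset.sum_ite_eq' (Finset.range N) ((i:ℕ)) (fun _ => c1),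
      Finset.sum_ite_eq' (Finset.range N) ((i:ℕ)+1) (fun _ => c2),
      if_pos (Finset.mem_range.mpr i.isLt)]
    have h3sum : (∑ k ∈ Finset.range N, if k + 1 = (i:ℕ) then c3 else 0) = c3 := by
      rcases Nat.eq_zero_or_pos (i:ℕ) with hi0 | hip
      · have hz : ∀ k ∈ Finset.range N, (if k + 1 = (i:ℕ) then c3 else 0) = 0 := by
          intro k _; rw [if_neg (by omega)]
        rw [Finset.sum_congr rfl hz, Finset.sum_const_zero, hc3, hi0, tds_zeta_zero]
        ring
      · obtain ⟨m, hm⟩ : ∃ m, (i:ℕ) = m + 1 := ⟨(i:ℕ) - 1, by omega⟩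
        have hm' : m < N := by have := i.isLt; omega
        simp only [hm, add_left_inj]
        rw [Finset.sum_ite_eq' (Finset.range N) m (fun _ => c3),
          if_pos (Finset.mem_range.mpr hm')]
    rw [h3sum]
    have hkey := tds_key N lam mu hmu (i:ℕ) ((j:ℕ)+1) i.isLt (by omega) j.isLt
    have hrhs : (if i = j then (1:ℝ) else 0) = (if (i:ℕ)+1 = (j:ℕ)+1 then (1:ℝ) else 0) := by
      rcases eq_or_ne i j with h | h
      · rw [if_pos h, if_pos (by rw [h])]
      · rw [if_neg h, if_neg (fun hc => h (Fin.ext (by omega)))]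
    rw [hrhs, ← hkey]
    by_cases hiN : (i:ℕ)+1 < N
    · rw [if_pos (Finset.mem_range.mpr hiN), hc1, hc2, hc3]
      ring
    · have hN : (i:ℕ)+1 = N := by have := i.isLt; omega
      rw [if_neg (by rw [Finset.mem_range]; omega), hc1, hc3]
      have hc2z : lam ((i:ℕ)+1) = 0 := by rw [hN, hlamN]
      rw [hc2z]
      ring
  exact ⟨key, mul_eq_one_comm.mp key⟩
end

section
/- For the stochastic logistic chain with rates λ_y = s y(N−y)/N, μ_y = u y on {0,…,N}, the expected tree length (expected path integral of the identity up to absorption) started from n ∈ {1,…,N} equals E[L_n] = Σ_{m=0}^{N−1} (1/u)(s/(Nu))^m · (N^{\underline{m+1}} − (N−n)^{\underline{m+1}})/(m+1). -/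
open Finset

lemma desc_step (a m : ℕ) :
    (((a+1).descFactorial (m+1) : ℝ)) - (a.descFactorial (m+1) : ℝ)
      = ((m : ℝ) + 1) * (a.descFactorial m : ℝ) := by
  rcases le_or_gt m a with h | h
  · rw [Nat.succ_descFactorial_succ, Nat.descFactorial_succ]
    push_cast [h]
    ring
  · rw [Nat.descFactorial_eq_zero_iff_lt.2 h,
      Nat.descFactorial_eq_zero_iff_lt.2 (by omega : a < m + 1),
      Nat.descFactorial_eq_zero_iff_lt.2 (by omega : a + 1 < m + 1)]
    simp

lemma desc_telescope (N m : ℕ) : ∀ n, n ≤ N →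
    (N.descFactorial (m+1) : ℝ) - ((N - n).descFactorial (m+1) : ℝ)
      = ((m : ℝ) + 1) * ∑ ℓ ∈ Icc 1 n, ((N - ℓ).descFactorial m : ℝ) := by
  intro n
  induction n with
  | zero => simp
  | succ n ih =>
    intro h
    rw [Finset.sum_Icc_succ_top (by omega : 1 ≤ n + 1)]
    have hN : N - n = (N - (n+1)) + 1 := by omega
    have hstep := desc_step (N - (n+1)) m
    rw [← hN] at hstep
    rw [mul_add, ← ih (by omega), ← hstep]
    ring

/-- Expected tree length for the stochastic logistic chain:
`E[L_n] = Σ_{j=1}^N ζ_{nj}·j` with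
`ζ_{nj} = Σ_{ℓ=1}^{min(n,j)} (1/(uj))(s/(Nu))^{j-ℓ}(N-ℓ)^{\underline{j-ℓ}}`
evaluates to the closed form
`Σ_{m=0}^{N-1} (1/u)(s/(Nu))^m (N^{\underline{m+1}} - (N-n)^{\underline{m+1}})/(m+1)`. -/
theorem expected_tree_length (N n : ℕ) (s u : ℝ) (hs : 0 < s) (hu : 0 < u)
    (hn1 : 1 ≤ n) (hnN : n ≤ N) :
    ∑ j ∈ Finset.Icc 1 N,
        (∑ ℓ ∈ Finset.Icc 1 (min n j),
          1 / (u * (j : ℝ)) * (s / ((N : ℝ) * u)) ^ (j - ℓ)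
            * ((N - ℓ).descFactorial (j - ℓ) : ℝ)) * (j : ℝ)
      = ∑ m ∈ Finset.range N, (1 / u) * (s / ((N : ℝ) * u)) ^ m
          * ((N.descFactorial (m + 1) : ℝ) - ((N - n).descFactorial (m + 1) : ℝ))
          / ((m : ℝ) + 1) := by
  have hu' : u ≠ 0 := ne_of_gt hu
  set x : ℝ := s / ((N : ℝ) * u) with hx
  -- LHS transformation
  have L1 : ∀ j ∈ Icc 1 N,
      (∑ ℓ ∈ Icc 1 (min n j),
          1 / (u * (j : ℝ)) * x ^ (j - ℓ) * ((N - ℓ).descFactorial (j - ℓ) : ℝ)) * (j : ℝ)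
      = ∑ ℓ ∈ Icc 1 n, (if ℓ ≤ j then
          (1/u) * x ^ (j - ℓ) * ((N - ℓ).descFactorial (j - ℓ) : ℝ) else 0) := by
    intro j hj
    simp only [mem_Icc] at hj
    have hj0 : (j : ℝ) ≠ 0 := by
      have : 0 < j := hj.1
      positivity
    rw [Finset.sum_mul]
    have hset : Icc 1 (min n j) = (Icc 1 n).filter (· ≤ j) := by
      ext ℓ
      simp only [mem_Icc, mem_filter, le_min_iff]
      omega
    rw [hset, Finset.sum_filter]
    refine Finset.sum_congr rfl fun ℓ _ => ?_
    by_cases hℓj : ℓ ≤ j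
    · simp only [hℓj, if_true]
      field_simp
    · simp [hℓj]
  conv_lhs => rw [Finset.sum_congr rfl L1, Finset.sum_comm]
  -- RHS transformation
  have R1 : ∀ m ∈ range N,
      (1/u) * x ^ m * ((N.descFactorial (m + 1) : ℝ) - ((N - n).descFactorial (m + 1) : ℝ))
        / ((m : ℝ) + 1)
      = ∑ ℓ ∈ Icc 1 n, (1/u) * x ^ m * ((N - ℓ).descFactorial m : ℝ) := by
    intro m _
    rw [desc_telescope N m n hnN, ← Finset.mul_sum]
    have hm : ((m : ℝ) + 1) ≠ 0 := by positivity
    field_simp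
  conv_rhs => rw [Finset.sum_congr rfl R1, Finset.sum_comm]
  refine Finset.sum_congr rfl fun ℓ hℓ => ?_
  simp only [mem_Icc] at hℓ
  -- inner sums
  rw [← Finset.sum_filter]
  have hset2 : (Icc 1 N).filter (fun j => ℓ ≤ j) = Icc ℓ N := by
    ext j
    simp only [mem_Icc, mem_filter]
    omega
  rw [hset2, show Icc ℓ N = Ico ℓ (N+1) by rfl, Finset.sum_Ico_eq_sum_range]
  have hterm : ∀ i, (1/u) * x ^ (ℓ + i - ℓ) * ((N - ℓ).descFactorial (ℓ + i - ℓ) : ℝ)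
      = (1/u) * x ^ i * ((N - ℓ).descFactorial i : ℝ) := by
    intro i
    rw [Nat.add_sub_cancel_left]
  rw [Finset.sum_congr rfl fun i _ => hterm i]
  refine Finset.sum_subset ?_ ?_
  · exact Finset.range_subset_range.2 (by omega)
  · intro i hi hni
    simp only [mem_range] at hi hni
    have : N - ℓ < i := by omega
    rw [Nat.descFactorial_eq_zero_iff_lt.2 this]
    simp
end
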